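/- The family of BDT priors π_{T_o}(·|q), indexed by finite label sets o, is marginally consistent: for any tree τ on leaf set o and any new label i ∉ o, the probability of τ equals the sum of the probabilities of all trees on o ∪ {i} obtained from τ by inserting leaf i into some edge of τ (including the phantom root edge), where the insertion assigns the new internal node type S-with-either-stacking (probability q/2 each) or P (probability 1-q). -/

import Mathlib

/-- Binary decomposition trees (BDTs): ordered binary trees with leaves labelled by
`α` and internal nodes typed `S` (`true`) or `P` (`false`); at an `S` node the left
child is the 'upper child'. -/
inductive BDT (α : Type) : Type
  | leaf : α → BDT α
  | node : Bool → BDT α → BDT α → BDT α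

namespace BDT

/-- Number of leaves. -/
def numLeaves {α : Type} : BDT α → ℕ
  | .leaf _ => 1
  | .node _ l r => l.numLeaves + r.numLeaves

/-- Number of `S`-typed internal nodes. -/
def sCount {α : Type} : BDT α → ℕ
  | .leaf _ => 0
  | .node s l r => (if s then 1 else 0) + l.sCount + r.sCount

/-- Number of edges, counting the phantom edge above the root. -/
def edgeCount {α : Type} : BDT α → ℕ
  | .leaf _ => 1
  | .node _ l r => 1 + l.edgeCount + r.edgeCount

/-- `insertAt t e s up a`: insert the new leaf `a` at the edge of `t` with index `e`
(edge `0` is the phantom edge above the root), breaking the edge with a new internal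
node of type `s` (`true` = `S`, `false` = `P`); for an `S` node, `up` decides whether
the new leaf is the upper child. -/
def insertAt {α : Type} : BDT α → ℕ → Bool → Bool → α → BDT α
  | t, 0, s, up, a => if up then .node s (.leaf a) t else .node s t (.leaf a)
  | .leaf b, _ + 1, _, _, _ => .leaf b
  | .node s0 l r, k + 1, s, up, a =>
      if k < l.edgeCount then .node s0 (l.insertAt k s up a) r
      else .node s0 l (r.insertAt (k - l.edgeCount) s up a)

end BDT

/-- The BDT prior `π(t|q) = (1/(2n-3)!!) (q/2)^{S(t)} (1-q)^{n-1-S(t)}` on trees with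
`n` leaves, as a function of the number `s = S(t)` of `S`-nodes. -/
noncomputable def treePrior (n : ℕ) (q : ℝ) (s : ℕ) : ℝ :=
  (1 / (Nat.doubleFactorial (2 * n - 3) : ℝ)) * (q / 2) ^ s * (1 - q) ^ (n - 1 - s)

namespace BDT

lemma numLeaves_pos {α : Type} (t : BDT α) : 1 ≤ t.numLeaves := by
  induction t with
  | leaf a => simp [numLeaves]
  | node s l r hl hr => simp [numLeaves]; omega

lemma sCount_lt {α : Type} (t : BDT α) : t.sCount + 1 ≤ t.numLeaves := by
  induction t with
  | leaf a => simp [numLeaves, sCount]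
  | node s l r hl hr =>
      simp only [numLeaves, sCount]
      cases s <;> simp <;> omega

lemma edgeCount_eq {α : Type} (t : BDT α) : t.edgeCount = 2 * t.numLeaves - 1 := by
  induction t with
  | leaf a => simp [numLeaves, edgeCount]
  | node s l r hl hr =>
      have h1 := l.numLeaves_pos
      have h2 := r.numLeaves_pos
      simp only [numLeaves, edgeCount]
      omega

lemma sCount_insertAt {α : Type} (t : BDT α) (e : ℕ) (s up : Bool) (a : α)
    (he : e < t.edgeCount) :
    (t.insertAt e s up a).sCount = t.sCount + (if s then 1 else 0) := by
  induction t generalizing e with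
  | leaf b =>
      simp only [edgeCount] at he
      interval_cases e
      cases up <;> simp [insertAt, sCount]
  | node s0 l r hl hr =>
      cases e with
      | zero =>
          cases up <;> simp [insertAt, sCount] <;> cases s0 <;> simp <;> omega
      | succ k =>
          simp only [edgeCount] at he
          by_cases hk : k < l.edgeCount
          · simp only [insertAt, hk, if_true, sCount, hl k hk]
            omega
          · have hk2 : k - l.edgeCount < r.edgeCount := by omega
            simp only [insertAt, hk, if_false, sCount, hr _ hk2]
            omega

end BDT

lemma dfac_step (n : ℕ) (hn : 1 ≤ n) :
    (Nat.doubleFactorial (2 * n - 1) : ℝ)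
      = (2 * n - 1 : ℕ) * Nat.doubleFactorial (2 * n - 3) := by
  match n, hn with
  | 1, _ => norm_num [Nat.doubleFactorial]
  | (m + 2), _ =>
      have h1 : 2 * (m + 2) - 1 = (2 * m + 1) + 2 := by omega
      have h2 : 2 * (m + 2) - 3 = 2 * m + 1 := by omega
      rw [h1, h2, Nat.doubleFactorial]
      push_cast
      ring

/-- Marginal consistency of the family of BDT priors: for any tree `τ` on `n` leaves
and any new leaf label `i`, the prior probability of `τ` equals the sum, over all
edges `e` of `τ` (including the phantom root edge) and all choices of type for the new
internal node (`S` with either stacking, or `P`), of the prior probabilities of the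
trees obtained from `τ` by inserting leaf `i` at `e`. -/
theorem bdt_prior_marginally_consistent {α : Type} (n : ℕ) (hn : 1 ≤ n)
    (q : ℝ) (hq0 : 0 ≤ q) (hq1 : q ≤ 1) (τ : BDT α) (hτ : τ.numLeaves = n) (i : α) :
    treePrior n q τ.sCount =
      ∑ e ∈ Finset.range τ.edgeCount,
        (treePrior (n + 1) q ((τ.insertAt e true true i).sCount)
          + treePrior (n + 1) q ((τ.insertAt e true false i).sCount)
          + treePrior (n + 1) q ((τ.insertAt e false false i).sCount)) := by
  set s := τ.sCount with hs
  have hsn : s + 1 ≤ n := hτ ▸ τ.sCount_lt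
  have hec : τ.edgeCount = 2 * n - 1 := by rw [τ.edgeCount_eq, hτ]
  have hsum : ∀ e ∈ Finset.range τ.edgeCount,
      (treePrior (n + 1) q ((τ.insertAt e true true i).sCount)
        + treePrior (n + 1) q ((τ.insertAt e true false i).sCount)
        + treePrior (n + 1) q ((τ.insertAt e false false i).sCount))
      = 2 * treePrior (n + 1) q (s + 1) + treePrior (n + 1) q s := by
    intro e he
    rw [Finset.mem_range] at he
    rw [τ.sCount_insertAt e true true i he, τ.sCount_insertAt e true false i he,
        τ.sCount_insertAt e false false i he]
    simp
    ring
  rw [Finset.sum_congr rfl hsum, Finset.sum_const, Finset.card_range, hec, nsmul_eq_mul]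
  unfold treePrior
  have h3 : 2 * (n + 1) - 3 = 2 * n - 1 := by omega
  rw [h3, dfac_step n hn]
  have hd : (Nat.doubleFactorial (2 * n - 3) : ℝ) ≠ 0 := by
    exact_mod_cast (Nat.doubleFactorial_pos _).ne'
  have hcast : ((2 * n - 1 : ℕ) : ℝ) = 2 * (n : ℝ) - 1 := by
    have : (1 : ℕ) ≤ 2 * n := by omega
    push_cast [Nat.cast_sub this]
    ring
  rw [hcast]
  have hm : 2 * (n : ℝ) - 1 ≠ 0 := by
    have : (1 : ℝ) ≤ (n : ℝ) := by exact_mod_cast hn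
    nlinarith
  have e1 : n + 1 - 1 - (s + 1) = n - 1 - s := by omega
  have e2 : n + 1 - 1 - s = (n - 1 - s) + 1 := by omega
  rw [e1, e2, pow_succ, pow_succ]
  generalize ((Nat.doubleFactorial (2 * n - 3) : ℝ)) = d at hd ⊢
  field_simp
  ring
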